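/- Let p ≥ 2 be an even integer, c < 0, and let a be the positive fixed point of Q_{p,c}(x) = x^p + c. Then Q_{p,c}(c) > a if and only if c < -2^{1/(p-1)}. -/

import Mathlib

theorem stmt_8 (p : ℕ) (hp : 2 ≤ p) (hpe : Even p) (c : ℝ) (hc : c < 0)
    (a : ℝ) (ha : 0 < a) (hfix : a ^ p + c = a) :
    a < c ^ p + c ↔ c < -(2 : ℝ) ^ ((1 : ℝ) / ((p : ℝ) - 1)) := by
  set b : ℝ := -c with hbdef
  have hb0 : 0 < b := by simp [hbdef]; linarith
  have hcb : c = -b := by simp [hbdef]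
  have hcp : c ^ p = b ^ p := by rw [hcb, Even.neg_pow hpe]
  have hap : a ^ p = a + b := by rw [hcb] at hfix; linarith
  have ha1 : 1 < a := by
    by_contra h
    push_neg at h
    have h2 : a ^ p ≤ a ^ 1 := pow_le_pow_of_le_one ha.le h (by omega)
    simp at h2; linarith
  have step1 : a < c ^ p + c ↔ a < b := by
    rw [hcp, hcb]
    constructor
    · intro h
      by_contra hle
      push_neg at hle
      have : b ^ p ≤ a ^ p := pow_le_pow_left₀ hb0.le hle p
      linarith
    · intro h
      have : a ^ p < b ^ p := pow_lt_pow_left₀ h ha.le (by omega)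
      linarith
  have step2 : a < b ↔ 2 * b < b ^ p := by
    constructor
    · intro h
      have h1 : (1:ℝ) ≤ b / a := (one_le_div ha).mpr h.le
      have h2 : b / a ≤ (b / a) ^ p := le_self_pow₀ h1 (by omega)
      rw [div_pow, div_le_div_iff₀ ha (pow_pos ha p)] at h2
      nlinarith [mul_pos ha hb0]
    · intro h
      by_contra hle
      push_neg at hle
      have h1 : (1:ℝ) ≤ a / b := (one_le_div hb0).mpr hle
      have h2 : a / b ≤ (a / b) ^ p := le_self_pow₀ h1 (by omega)
      rw [div_pow, div_le_div_iff₀ hb0 (pow_pos hb0 p)] at h2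
      nlinarith [mul_pos hb0 hb0]
  have step3 : 2 * b < b ^ p ↔ 2 < b ^ (p - 1) := by
    have hps : p = p - 1 + 1 := by omega
    nth_rewrite 1 [hps]
    rw [pow_succ]
    exact mul_lt_mul_iff_left₀ hb0
  have hcast : ((p : ℝ) - 1) = ((p - 1 : ℕ) : ℝ) := by
    have h1 : (1:ℕ) ≤ p := by omega
    push_cast [h1]
    ring
  have hpos : (0:ℝ) < ((p - 1 : ℕ) : ℝ) := by
    exact_mod_cast Nat.pos_of_ne_zero (by omega)
  have key : (2:ℝ) ^ (((p - 1 : ℕ) : ℝ))⁻¹ < b ↔ 2 < b ^ (p - 1) := by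
    rw [Real.rpow_inv_lt_iff_of_pos (by norm_num) hb0.le hpos, Real.rpow_natCast]
  have step4 : 2 < b ^ (p - 1) ↔ c < -(2 : ℝ) ^ ((1 : ℝ) / ((p : ℝ) - 1)) := by
    rw [hcast, one_div, ← key]
    constructor <;> intro h <;> linarith
  rw [step1, step2, step3, step4]
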